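/- Erdős–Rado theorem: for every r < ω and infinite cardinal μ, the partition relation (ℶ_r(μ))⁺ → (μ⁺)^{r+1}_μ holds; that is, for every coloring of the (r+1)-element subsets of (ℶ_r(μ))⁺ into μ many colors, there is a subset of cardinality μ⁺ all of whose (r+1)-element subsets get the same color. -/

import Mathlib

open Cardinal

/-- Finite iteration of the beth operation: `iterBeth r μ = ℶ_r(μ)`. -/
def iterBeth : ℕ → Cardinal → Cardinal
  | 0, μ => μ
  | r + 1, μ => 2 ^ iterBeth r μ

universe u

attribute [local instance] Classical.propDecidable

lemma le_iterBeth (r : ℕ) (μ : Cardinal.{u}) : μ ≤ iterBeth r μ := by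
  induction r with
  | zero => exact le_rfl
  | succ r ih => exact ih.trans (cantor _).le

lemma aleph0_le_iterBeth (r : ℕ) {μ : Cardinal.{u}} (hμ : ℵ₀ ≤ μ) : ℵ₀ ≤ iterBeth r μ :=
  hμ.trans (le_iterBeth r μ)

lemma mk_finset_le' (X : Type u) : #(Finset X) ≤ max ℵ₀ #X := by
  cases finite_or_infinite X with
  | inl h => exact le_max_of_le_left (mk_le_aleph0)
  | inr h => exact le_max_of_le_right (mk_finset_of_infinite X).le

section ER
variable {α β : Type u} (f : Finset α → β) (κ : Cardinal.{u}) [Nonempty α]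

/-- The "type" of `y` over `B`: colors of `(r+1)`-sets from `B` together with `y`.
(We don't restrict cardinality here; the function records colors of all finite subsets.) -/
noncomputable def typeOf (B : Set α) (y : α) : Finset ↥B → β :=
  fun t => f (insert y (t.map (Function.Embedding.subtype (· ∈ B))))

/-- A witness realizing type `τ` over `B` outside of `B`, if one exists. -/
noncomputable def wit (B : Set α) (τ : Finset ↥B → β) : α :=
  if h : ∃ z, z ∉ B ∧ typeOf f B z = τ then h.choose else Classical.arbitrary α

lemma wit_spec {B : Set α} {τ : Finset ↥B → β} (h : ∃ z, z ∉ B ∧ typeOf f B z = τ) :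
    wit f B τ ∉ B ∧ typeOf f B (wit f B τ) = τ := by
  rw [wit, dif_pos h]; exact h.choose_spec

/-- One closure step: add witnesses for all types over small subsets of `S`. -/
noncomputable def gstep (S : Set α) : Set α :=
  S ∪ Set.range (fun p : Σ B : {B : Set α // B ⊆ S ∧ #B ≤ κ}, (Finset ↥(B.1) → β) =>
    wit f p.1.1 p.2)

lemma subset_gstep (S : Set α) : S ⊆ gstep f κ S := Set.subset_union_left

lemma wit_mem_gstep {S B : Set α} (hBS : B ⊆ S) (hBκ : #B ≤ κ) (τ : Finset ↥B → β) :
    wit f B τ ∈ gstep f κ S :=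
  Set.mem_union_right _ ⟨⟨⟨B, hBS, hBκ⟩, τ⟩, rfl⟩

lemma mk_gstep_le (hκ : ℵ₀ ≤ κ) (hβ : #β ≤ κ) {S : Set α} (hS : #S ≤ 2 ^ κ) :
    #(gstep f κ S) ≤ 2 ^ κ := by
  have h2κ : ℵ₀ ≤ 2 ^ κ := hκ.trans (cantor κ).le
  have hκ2 : κ ≤ 2 ^ κ := (cantor κ).le
  have hpow : ((2 : Cardinal.{u}) ^ κ) ^ κ = 2 ^ κ := by
    rw [← power_mul, mul_eq_self hκ]
  have hB : #{B : Set α // B ⊆ S ∧ #B ≤ κ} ≤ 2 ^ κ := by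
    refine (mk_bounded_subset_le S κ).trans ?_
    calc max #S ℵ₀ ^ κ ≤ (2 ^ κ) ^ κ :=
          power_le_power_right (max_le hS (hκ.trans hκ2))
      _ = 2 ^ κ := hpow
  have hτ : ∀ B : {B : Set α // B ⊆ S ∧ #B ≤ κ}, #(Finset ↥(B.1) → β) ≤ 2 ^ κ := by
    intro B
    rw [mk_arrow]
    simp only [Cardinal.lift_id]
    calc #β ^ #(Finset ↥(B.1)) ≤ κ ^ #(Finset ↥(B.1)) :=
          power_le_power_right hβ
      _ ≤ κ ^ κ := by
          apply power_le_power_left (aleph0_pos.trans_le hκ).ne'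
          exact (mk_finset_le' _).trans (max_le hκ B.2.2)
      _ ≤ (2 ^ κ) ^ κ := power_le_power_right hκ2
      _ = 2 ^ κ := hpow
  have hrange : #(Set.range (fun p : Σ B : {B : Set α // B ⊆ S ∧ #B ≤ κ},
      (Finset ↥(B.1) → β) => wit f p.1.1 p.2)) ≤ 2 ^ κ := by
    refine mk_range_le.trans ?_
    refine (mk_sigma _).trans_le ?_
    refine (sum_le_sum _ (fun _ => 2 ^ κ) hτ).trans ?_
    rw [sum_const']
    calc #{B : Set α // B ⊆ S ∧ #B ≤ κ} * 2 ^ κ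
        ≤ 2 ^ κ * 2 ^ κ := mul_le_mul_left hB _
      _ = 2 ^ κ := mul_eq_self h2κ
  calc #(gstep f κ S) ≤ #S + _ := mk_union_le _ _
    _ ≤ 2 ^ κ + 2 ^ κ := add_le_add hS hrange
    _ = 2 ^ κ := add_eq_self h2κ

/-- index type of order type `κ⁺` -/
abbrev Wty (κ : Cardinal.{u}) : Type u := (Order.succ κ).ord.ToType

instance (κ : Cardinal.{u}) : IsWellOrder (Wty κ) (· < ·) := isWellOrder_lt

noncomputable def chainSet : Wty κ → Set α := fun w =>
  gstep f κ (⋃ v : {v : Wty κ // v < w}, chainSet v.1)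
termination_by w => w
decreasing_by exact v.2

lemma chainSet_eq (w : Wty κ) :
    chainSet f κ w = gstep f κ (⋃ v : {v : Wty κ // v < w}, chainSet f κ v.1) := by
  rw [chainSet]

lemma mk_Iio_le (w : Wty κ) : #{v : Wty κ // v < w} ≤ κ := by
  haveI : IsWellOrder (Wty κ) (· < ·) := isWellOrder_lt
  have h1 : (Ordinal.typein (· < ·) w).card = #{v : Wty κ // v < w} := Ordinal.card_typein w
  have h2 : Ordinal.typein ((· < ·) : Wty κ → Wty κ → Prop) w < (Order.succ κ).ord := by
    have := Ordinal.typein_lt_type ((· < ·) : Wty κ → Wty κ → Prop) w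
    rwa [Ordinal.type_toType] at this
  rw [← h1]
  exact Order.lt_succ_iff.mp (Cardinal.lt_ord.mp h2)

lemma mk_chainSet_le (hκ : ℵ₀ ≤ κ) (hβ : #β ≤ κ) (w : Wty κ) :
    #(chainSet f κ w) ≤ 2 ^ κ := by
  induction w using WellFoundedLT.induction with
  | ind w ih =>
    rw [chainSet_eq]
    refine mk_gstep_le f κ hκ hβ ?_
    have h2κ : ℵ₀ ≤ (2 : Cardinal.{u}) ^ κ := hκ.trans (cantor κ).le
    refine mk_iUnion_le_sum_mk.trans ?_
    refine (sum_le_sum _ (fun _ => 2 ^ κ) (fun v : {v : Wty κ // v < w} => ih v.1 v.2)).trans ?_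
    rw [sum_const']
    calc #{v : Wty κ // v < w} * 2 ^ κ ≤ 2 ^ κ * 2 ^ κ :=
          mul_le_mul_left ((mk_Iio_le κ w).trans (cantor κ).le) _
      _ = 2 ^ κ := mul_eq_self h2κ

/-- The closed set `A`. -/
noncomputable def bigA : Set α := ⋃ w : Wty κ, chainSet f κ w

lemma mk_bigA_le (hκ : ℵ₀ ≤ κ) (hβ : #β ≤ κ) : #(bigA f κ) ≤ 2 ^ κ := by
  have h2κ : ℵ₀ ≤ (2 : Cardinal.{u}) ^ κ := hκ.trans (cantor κ).le
  refine mk_iUnion_le_sum_mk.trans ?_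
  refine (sum_le_sum _ (fun _ => 2 ^ κ) (fun w => mk_chainSet_le f κ hκ hβ w)).trans ?_
  rw [sum_const']
  calc #(Wty κ) * 2 ^ κ ≤ 2 ^ κ * 2 ^ κ := by
        refine mul_le_mul_left ?_ _
        rw [Cardinal.mk_toType, Cardinal.card_ord]
        exact Order.succ_le_of_lt (cantor κ)
    _ = 2 ^ κ := mul_eq_self h2κ

lemma exists_chain_bound {B : Set α} (hBA : B ⊆ bigA f κ) (hBκ : #B ≤ κ) (hκ : ℵ₀ ≤ κ) :
    ∃ w : Wty κ, B ⊆ ⋃ v : {v : Wty κ // v < w}, chainSet f κ v.1 := by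
  have hreg : ((Order.succ κ).ord).cof = Order.succ κ :=
    (Cardinal.isRegular_succ hκ).cof_eq
  choose i hi using fun b : B => Set.mem_iUnion.mp (hBA b.2)
  have hbd : Set.Bounded (· < ·) (Set.range i) := by
    refine not_isCofinal_iff.mp fun hc => ?_
    have hcof := Order.cof_le hc
    rw [Ordinal.cof_toType, hreg] at hcof
    exact ((mk_range_le.trans hBκ).trans_lt (Order.lt_succ κ)).not_ge hcof
  obtain ⟨w, hw⟩ := hbd
  refine ⟨w, fun b hb => ?_⟩
  refine Set.mem_iUnion.mpr ⟨⟨i ⟨b, hb⟩, hw _ (Set.mem_range_self _)⟩, hi ⟨b, hb⟩⟩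

lemma wit_mem_bigA {B : Set α} (hBA : B ⊆ bigA f κ) (hBκ : #B ≤ κ) (hκ : ℵ₀ ≤ κ)
    (τ : Finset ↥B → β) : wit f B τ ∈ bigA f κ := by
  obtain ⟨w, hw⟩ := exists_chain_bound f κ hBA hBκ hκ
  refine Set.mem_iUnion.mpr ⟨w, ?_⟩
  rw [chainSet_eq]
  exact wit_mem_gstep f κ hw hBκ τ

noncomputable def xseq (x : α) : Wty κ → α := fun w =>
  wit f {a : α | ∃ v : {v : Wty κ // v < w}, xseq x v.1 = a}
    (typeOf f {a : α | ∃ v : {v : Wty κ // v < w}, xseq x v.1 = a} x)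
termination_by w => w
decreasing_by all_goals exact v.2

/-- The set of previously chosen points. -/
noncomputable def prevSet (x : α) (w : Wty κ) : Set α :=
  {a : α | ∃ v : {v : Wty κ // v < w}, xseq f κ x v.1 = a}

lemma xseq_eq (x : α) (w : Wty κ) :
    xseq f κ x w = wit f (prevSet f κ x w) (typeOf f (prevSet f κ x w) x) := by
  rw [xseq]; rfl

lemma mk_prevSet_le (x : α) (w : Wty κ) : #(prevSet f κ x w) ≤ κ := by
  have : prevSet f κ x w = Set.range (fun v : {v : Wty κ // v < w} => xseq f κ x v.1) := by
    ext a; simp [prevSet, eq_comm, Set.range]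
  rw [this]
  exact mk_range_le.trans (mk_Iio_le κ w)

lemma xseq_props (hκ : ℵ₀ ≤ κ) (hβ : #β ≤ κ) {x : α} (hx : x ∉ bigA f κ) (w : Wty κ) :
    xseq f κ x w ∈ bigA f κ ∧ xseq f κ x w ∉ prevSet f κ x w ∧
      typeOf f (prevSet f κ x w) (xseq f κ x w) = typeOf f (prevSet f κ x w) x := by
  induction w using WellFoundedLT.induction with
  | ind w ih =>
    have hsub : prevSet f κ x w ⊆ bigA f κ := by
      rintro a ⟨v, rfl⟩
      exact (ih v.1 v.2).1
    have hxB : x ∉ prevSet f κ x w := fun h => hx (hsub h)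
    have hex : ∃ z, z ∉ prevSet f κ x w ∧
        typeOf f (prevSet f κ x w) z = typeOf f (prevSet f κ x w) x := ⟨x, hxB, rfl⟩
    have hspec := wit_spec f hex
    refine ⟨?_, ?_, ?_⟩
    · rw [xseq_eq]
      exact wit_mem_bigA f κ hsub (mk_prevSet_le f κ x w) hκ _
    · rw [xseq_eq]; exact hspec.1
    · rw [xseq_eq]; exact hspec.2

lemma xseq_injective (hκ : ℵ₀ ≤ κ) (hβ : #β ≤ κ) {x : α} (hx : x ∉ bigA f κ) :
    Function.Injective (xseq f κ x) := by
  intro v w h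
  by_contra hne
  rcases lt_or_gt_of_ne hne with hlt | hlt
  · exact (xseq_props f κ hκ hβ hx w).2.1 ⟨⟨v, hlt⟩, h⟩
  · exact (xseq_props f κ hκ hβ hx v).2.1 ⟨⟨w, hlt⟩, h.symm⟩

end ER

lemma finset_subset_coe_subtype {α : Type u} {X : Set α} {Y : Set ↥X} {t : Finset α}
    [DecidablePred (· ∈ X)]
    (ht : ∀ a ∈ t, a ∈ Subtype.val '' Y) : ∀ a' ∈ t.subtype (· ∈ X), a' ∈ Y := by
  intro a' ha'
  have hat : (a' : α) ∈ t := Finset.mem_subtype.mp ha'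
  obtain ⟨y, hy, hval⟩ := ht _ hat
  rwa [show y = a' from Subtype.ext hval] at hy


/-- The Erdős–Rado theorem: for `r < ω` and infinite `μ`,
`(ℶ_r(μ))⁺ → (μ⁺)^{r+1}_μ`: any coloring of the `(r+1)`-element subsets of a set of
cardinality `(ℶ_r(μ))⁺` into at most `μ` colors has a homogeneous set of
cardinality `μ⁺`. -/
theorem erdos_rado (r : ℕ) (μ : Cardinal.{u}) (hμ : ℵ₀ ≤ μ)
    {α : Type u} (hα : #α = Order.succ (iterBeth r μ))
    {β : Type u} (hβ : #β ≤ μ)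
    (f : Finset α → β) :
    ∃ X : Set α, #X = Order.succ μ ∧
      ∃ b : β, ∀ s : Finset α, ↑s ⊆ X → s.card = r + 1 → f s = b := by
  classical
  induction r generalizing α β with
  | zero =>
    have hα' : #α = Order.succ μ := hα
    set h : α → β := fun a => f {a} with hhdef
    have hex : ∃ b : β, ¬ #(h ⁻¹' {b}) ≤ μ := by
      by_contra hcon
      push_neg at hcon
      have hle : #α ≤ μ := by
        have huniv : (Set.univ : Set α) = ⋃ b : β, h ⁻¹' {b} := by
          ext a; simp
        calc #α = #(Set.univ : Set α) := mk_univ.symm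
          _ = #(⋃ b : β, h ⁻¹' {b}) := by rw [huniv]
          _ ≤ Cardinal.sum (fun b : β => #(h ⁻¹' {b})) := mk_iUnion_le_sum_mk
          _ ≤ Cardinal.sum (fun _ : β => μ) := sum_le_sum _ _ hcon
          _ = #β * μ := sum_const' _ _
          _ ≤ μ * μ := mul_le_mul_left hβ _
          _ = μ := mul_eq_self hμ
      rw [hα'] at hle
      exact (Order.lt_succ μ).not_ge hle
    obtain ⟨b, hb⟩ := hex
    refine ⟨h ⁻¹' {b}, ?_, b, ?_⟩
    · refine le_antisymm ?_ ?_
      · rw [← hα']; exact mk_set_le _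
      · exact Order.succ_le_of_lt (not_le.mp hb)
    · intro s hs hcard
      obtain ⟨a, rfl⟩ := Finset.card_eq_one.mp hcard
      have ha : a ∈ h ⁻¹' {b} := hs (by simp)
      simpa [hhdef] using ha
  | succ r IH =>
    set κ := iterBeth r μ with hκdef
    have hκ : ℵ₀ ≤ κ := aleph0_le_iterBeth r hμ
    have hβκ : #β ≤ κ := hβ.trans (le_iterBeth r μ)
    have hα' : #α = Order.succ ((2 : Cardinal.{u}) ^ κ) := hα
    haveI : Nonempty α := by
      rw [← mk_ne_zero_iff, hα']
      exact ((zero_le (a := _)).trans_lt (Order.lt_succ _)).ne'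
    -- a point outside the closed set
    have hx : ∃ x, x ∉ bigA f κ := by
      by_contra hcon
      push_neg at hcon
      have huniv : bigA f κ = Set.univ := Set.eq_univ_of_forall hcon
      have : #α ≤ 2 ^ κ := by
        rw [← mk_univ (α := α), ← huniv]
        exact mk_bigA_le f κ hκ hβκ
      rw [hα'] at this
      exact (Order.lt_succ ((2 : Cardinal.{u}) ^ κ)).not_ge this
    obtain ⟨x, hx⟩ := hx
    set X : Set α := Set.range (xseq f κ x) with hXdef
    have hinj : Function.Injective (xseq f κ x) := xseq_injective f κ hκ hβκ hx
    have hXcard : #↥X = Order.succ (iterBeth r μ) := by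
      rw [hXdef, mk_range_eq _ hinj, Cardinal.mk_toType, Cardinal.card_ord]
    set F : Finset ↥X → β :=
      fun t => f (insert x (t.map (Function.Embedding.subtype (· ∈ X)))) with hFdef
    obtain ⟨Y, hYmk, b, hYhom⟩ := IH hXcard hβ F
    refine ⟨Subtype.val '' Y, ?_, b, ?_⟩
    · rw [Cardinal.mk_image_eq Subtype.val_injective]; exact hYmk
    · intro s hs hcard
      have hsX : ∀ a ∈ s, a ∈ X := by
        intro a ha
        obtain ⟨y, _, rfl⟩ := hs ha
        exact y.2
      haveI hWne : Nonempty (Wty κ) := by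
        rw [Ordinal.toType_nonempty_iff_ne_zero, Ne, Cardinal.ord_eq_zero]
        exact ((zero_le (a := _)).trans_lt (Order.lt_succ κ)).ne'
      set ind : α → Wty κ := fun a =>
        if h : ∃ v, xseq f κ x v = a then h.choose else Classical.arbitrary _ with hinddef
      have hind : ∀ a ∈ s, xseq f κ x (ind a) = a := by
        intro a ha
        obtain ⟨v, hv⟩ := hsX a ha
        rw [hinddef]
        simp only
        rw [dif_pos ⟨v, hv⟩]
        exact (⟨v, hv⟩ : ∃ v, xseq f κ x v = a).choose_spec
      have hsne : s.Nonempty := Finset.card_pos.mp (by omega)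
      set w : Wty κ := (s.image ind).max' (hsne.image _) with hwdef
      obtain ⟨m, hm_s, hm_ind⟩ := Finset.mem_image.mp ((s.image ind).max'_mem (hsne.image _))
      have hm : xseq f κ x w = m := by rw [hwdef, ← hm_ind]; exact hind m hm_s
      set t : Finset α := s.erase m with htdef
      have htcard : t.card = r + 1 := by
        rw [htdef, Finset.card_erase_of_mem hm_s, hcard]
        omega
      have ht_s : ∀ a ∈ t, a ∈ s := fun a ha => Finset.mem_of_mem_erase ha
      have ht_prev : ∀ a ∈ t, a ∈ prevSet f κ x w := by
        intro a ha
        have hv : xseq f κ x (ind a) = a := hind a (ht_s a ha)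
        have hle : ind a ≤ w := Finset.le_max' _ _ (Finset.mem_image_of_mem ind (ht_s a ha))
        have hne : ind a ≠ w := by
          intro h
          exact (Finset.ne_of_mem_erase ha) (by rw [← hv, h, hm])
        exact ⟨⟨ind a, lt_of_le_of_ne hle hne⟩, hv⟩
      have hs_eq : s = insert m t := (Finset.insert_erase hm_s).symm
      have htype := (xseq_props f κ hκ hβκ hx w).2.2
      have h1 : f (insert m t) = f (insert x t) := by
        have hc := congrFun htype (t.subtype (· ∈ prevSet f κ x w))
        rw [typeOf, typeOf] at hc
        simp only [Finset.subtype_map_of_mem ht_prev] at hc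
        rwa [hm] at hc
      have ht_X : ∀ a ∈ t, a ∈ X := fun a ha => hsX a (ht_s a ha)
      have h2 : F (t.subtype (· ∈ X)) = b := by
        apply hYhom
        · exact fun a' ha' => finset_subset_coe_subtype (fun a ha => hs (ht_s a ha)) a' ha'
        · rw [Finset.card_subtype, Finset.filter_true_of_mem ht_X, htcard]
      have h3 : F (t.subtype (· ∈ X)) = f (insert x t) := by
        rw [hFdef]
        simp only [Finset.subtype_map_of_mem ht_X]
      rw [hs_eq, h1, ← h3, h2]
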